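/- Let G be a strongly connected directed graph with n vertices and m edges, and fix α ∈ [0,1], an edge e = xy ∈ E, and constants Λ, δ > 0. Then there exists a constant C depending only on n, m, Λ, δ such that for any two weight vectors w^{(1)}, w^{(2)} with Λ^{-1} ≤ w_e^{(i)} ≤ Λ for all edges e and |w_e^{(1)} − w_e^{(2)}| ≤ δ for all e, the directed Wasserstein distances satisfy |W^{(1)}(μ_{x,α}^{out}, μ_{y,α}^{out}) − W^{(2)}(μ_{x,α}^{out}, μ_{y,α}^{out})| ≤ C · |w^{(1)} − w^{(2)}|. -/

import Mathlib

open Finset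

variable {V E : Type*}

/-- `p` is a directed path (list of edges) from `x` to `y`. -/
def IsPathFrom (src tgt : E → V) : V → V → List E → Prop
  | x, y, [] => x = y
  | x, y, e :: p => src e = x ∧ IsPathFrom src tgt (tgt e) y p

/-- Total weight of a path. -/
def pathWeight (w : E → ℝ) (p : List E) : ℝ := (p.map w).sum

/-- Directed shortest-path distance induced by weights `w`. -/
noncomputable def gdist (src tgt : E → V) (w : E → ℝ) (x y : V) : ℝ :=
  sInf {c : ℝ | ∃ p : List E, IsPathFrom src tgt x y p ∧ c = pathWeight w p}

/-- A directed graph is strongly connected if any vertex can reach any other. -/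
def StronglyConnected (src tgt : E → V) : Prop :=
  ∀ x y : V, ∃ p : List E, IsPathFrom src tgt x y p

/-- Total weight of edges going out of `x`. -/
def outWeight [Fintype E] [DecidableEq V] (src : E → V) (w : E → ℝ) (x : V) : ℝ :=
  ∑ e : E, if src e = x then w e else 0

/-- The outward `α`-lazy one-step random walk at `x`. -/
noncomputable def lazyWalk [Fintype E] [DecidableEq V] (src tgt : E → V) (w : E → ℝ)
    (α : ℝ) (x z : V) : ℝ :=
  if z = x then α
  else (1 - α) * (∑ e : E, if src e = x ∧ tgt e = z then w e else 0) / outWeight src w x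

/-- `A` is a coupling between the probability measures `μ₁` and `μ₂`. -/
def IsCoupling [Fintype V] (μ₁ μ₂ : V → ℝ) (A : V → V → ℝ) : Prop :=
  (∀ u v, 0 ≤ A u v) ∧ (∀ u, ∑ v, A u v = μ₁ u) ∧ (∀ v, ∑ u, A u v = μ₂ v) ∧
    ∑ u, ∑ v, A u v = 1

/-- The directed Wasserstein distance from `μ₁` to `μ₂`. -/
noncomputable def wasserstein [Fintype V] (src tgt : E → V) (w : E → ℝ) (μ₁ μ₂ : V → ℝ) : ℝ :=
  sInf {c : ℝ | ∃ A : V → V → ℝ, IsCoupling μ₁ μ₂ A ∧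
    c = ∑ u, ∑ v, A u v * gdist src tgt w u v}

/-- The directed Ollivier-type Ricci curvature of the edge `e`. -/
noncomputable def ricci [Fintype V] [Fintype E] [DecidableEq V] (src tgt : E → V)
    (w : E → ℝ) (α : ℝ) (e : E) : ℝ :=
  1 - wasserstein src tgt w (lazyWalk src tgt w α (src e)) (lazyWalk src tgt w α (tgt e)) /
      gdist src tgt w (src e) (tgt e)

/-- Euclidean norm of a weight vector. -/
noncomputable def enorm [Fintype E] (u : E → ℝ) : ℝ := Real.sqrt (∑ e : E, (u e) ^ 2)

/-! ### Auxiliary lemmas -/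

section PathLemmas

lemma aux_pathWeight_nil (w : E → ℝ) : pathWeight w [] = 0 := rfl

lemma aux_pathWeight_cons (w : E → ℝ) (e : E) (p : List E) :
    pathWeight w (e :: p) = w e + pathWeight w p := by simp [pathWeight]

lemma aux_pathWeight_nonneg {w : E → ℝ} (hw : ∀ e, 0 ≤ w e) (p : List E) :
    0 ≤ pathWeight w p := by
  induction p with
  | nil => simp [aux_pathWeight_nil]
  | cons e p ih => rw [aux_pathWeight_cons]; exact add_nonneg (hw e) ih

lemma aux_length_le_pathWeight {w : E → ℝ} {c : ℝ} (hw : ∀ e, c ≤ w e) (p : List E) :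
    c * p.length ≤ pathWeight w p := by
  induction p with
  | nil => simp [aux_pathWeight_nil]
  | cons e p ih =>
    rw [aux_pathWeight_cons]
    push_cast [List.length_cons]
    nlinarith [hw e]

lemma aux_pathWeight_le {w : E → ℝ} {c : ℝ} (hw : ∀ e, w e ≤ c) (p : List E) :
    pathWeight w p ≤ c * p.length := by
  induction p with
  | nil => simp [aux_pathWeight_nil]
  | cons e p ih =>
    rw [aux_pathWeight_cons]
    push_cast [List.length_cons]
    nlinarith [hw e]

lemma aux_pathWeight_diff {w1 w2 : E → ℝ} {ε : ℝ} (hw : ∀ e, |w1 e - w2 e| ≤ ε) (p : List E) :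
    |pathWeight w1 p - pathWeight w2 p| ≤ ε * p.length := by
  induction p with
  | nil => simp [aux_pathWeight_nil]
  | cons e p ih =>
    rw [aux_pathWeight_cons, aux_pathWeight_cons]
    push_cast [List.length_cons]
    have := hw e
    have h2 := abs_add_le (w1 e - w2 e) (pathWeight w1 p - pathWeight w2 p)
    calc |w1 e + pathWeight w1 p - (w2 e + pathWeight w2 p)|
        = |(w1 e - w2 e) + (pathWeight w1 p - pathWeight w2 p)| := by ring_nf
      _ ≤ |w1 e - w2 e| + |pathWeight w1 p - pathWeight w2 p| := h2
      _ ≤ ε * (p.length + 1) := by nlinarith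

end PathLemmas

section GdistLemmas

variable (src tgt : E → V)

lemma aux_gdist_bddBelow {w : E → ℝ} (hw : ∀ e, 0 ≤ w e) (x y : V) :
    BddBelow {c : ℝ | ∃ p : List E, IsPathFrom src tgt x y p ∧ c = pathWeight w p} := by
  refine ⟨0, fun c hc => ?_⟩
  obtain ⟨p, _, rfl⟩ := hc
  exact aux_pathWeight_nonneg hw p

lemma aux_gdist_nonneg {w : E → ℝ} (hw : ∀ e, 0 ≤ w e) (x y : V) :
    0 ≤ gdist src tgt w x y := by
  apply Real.sInf_nonneg
  rintro c ⟨p, _, rfl⟩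
  exact aux_pathWeight_nonneg hw p

lemma aux_gdist_le_pathWeight {w : E → ℝ} (hw : ∀ e, 0 ≤ w e) {x y : V} {p : List E}
    (hp : IsPathFrom src tgt x y p) : gdist src tgt w x y ≤ pathWeight w p :=
  csInf_le (aux_gdist_bddBelow src tgt hw x y) ⟨p, hp, rfl⟩

lemma aux_gdist_lipschitz {Λ NB ε : ℝ} (hΛ : 0 < Λ) {w1 w2 : E → ℝ}
    (hw1a : ∀ e, Λ⁻¹ ≤ w1 e)
    (hw2a : ∀ e, Λ⁻¹ ≤ w2 e)
    (hε : 0 ≤ ε) (hwd : ∀ e, |w1 e - w2 e| ≤ ε)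
    (x y : V) (hB : gdist src tgt w2 x y ≤ NB)
    (hne : ∃ p : List E, IsPathFrom src tgt x y p) :
    gdist src tgt w1 x y ≤ gdist src tgt w2 x y + Λ * (NB + 1) * ε := by
  have hw20 : ∀ e, 0 ≤ w2 e := fun e => le_trans (by positivity) (hw2a e)
  have hw10 : ∀ e, 0 ≤ w1 e := fun e => le_trans (by positivity) (hw1a e)
  apply le_of_forall_pos_le_add
  intro ε' hε'
  have hSne : {c : ℝ | ∃ p : List E, IsPathFrom src tgt x y p ∧ c = pathWeight w2 p}.Nonempty := by
    obtain ⟨p, hp⟩ := hne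
    exact ⟨pathWeight w2 p, p, hp, rfl⟩
  have hbdd := aux_gdist_bddBelow src tgt hw20 x y
  have hlt : gdist src tgt w2 x y < gdist src tgt w2 x y + min ε' 1 := by
    have : 0 < min ε' 1 := lt_min hε' one_pos
    linarith
  rw [show gdist src tgt w2 x y
      = sInf {c : ℝ | ∃ p : List E, IsPathFrom src tgt x y p ∧ c = pathWeight w2 p}
      from rfl] at hlt
  obtain ⟨c, ⟨p, hp, rfl⟩, hclt⟩ := (csInf_lt_iff hbdd hSne).mp hlt
  have hgd : sInf {c : ℝ | ∃ p : List E, IsPathFrom src tgt x y p ∧ c = pathWeight w2 p}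
      = gdist src tgt w2 x y := rfl
  have hlen : (p.length : ℝ) ≤ Λ * (NB + 1) := by
    have h1 : Λ⁻¹ * p.length ≤ pathWeight w2 p := aux_length_le_pathWeight hw2a p
    have h2 : pathWeight w2 p ≤ NB + 1 := by
      have := min_le_right ε' 1
      linarith
    rw [← mul_le_mul_iff_right₀ (inv_pos.mpr hΛ)]
    calc Λ⁻¹ * p.length ≤ NB + 1 := le_trans h1 h2
      _ = Λ⁻¹ * (Λ * (NB + 1)) := by field_simp
  have hd := aux_pathWeight_diff hwd p
  have key : pathWeight w1 p ≤ pathWeight w2 p + Λ * (NB + 1) * ε := by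
    have habs : pathWeight w1 p - pathWeight w2 p ≤ ε * p.length := le_trans (le_abs_self _) hd
    nlinarith
  have := aux_gdist_le_pathWeight src tgt hw10 hp
  have hm := min_le_left ε' 1
  linarith

end GdistLemmas

section LazyWalkLemmas

variable [Fintype V] [Fintype E] [DecidableEq V] (src tgt : E → V)

lemma aux_outWeight_pos {w : E → ℝ} {Λ : ℝ} (hΛ : 0 < Λ) (hw : ∀ e, Λ⁻¹ ≤ w e)
    {x : V} {e0 : E} (he0 : src e0 = x) : Λ⁻¹ ≤ outWeight src w x := by
  classical
  have h0 : ∀ e : E, (0:ℝ) ≤ if src e = x then w e else 0 := by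
    intro e; split
    · exact le_trans (by positivity) (hw e)
    · exact le_refl 0
  calc Λ⁻¹ ≤ w e0 := hw e0
    _ = (if src e0 = x then w e0 else 0) := by simp [he0]
    _ ≤ ∑ e : E, if src e = x then w e else 0 :=
        Finset.single_le_sum (fun e _ => h0 e) (mem_univ e0)
    _ = outWeight src w x := rfl

omit [Fintype V] in
lemma aux_outWeight_le {w : E → ℝ} {Λ : ℝ} (hΛ : 0 < Λ) (hw0 : ∀ e, 0 ≤ w e)
    (hw : ∀ e, w e ≤ Λ) (x : V) : outWeight src w x ≤ (Fintype.card E : ℝ) * Λ := by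
  classical
  unfold outWeight
  calc (∑ e : E, if src e = x then w e else 0) ≤ ∑ _e : E, Λ := by
        apply Finset.sum_le_sum
        intro e _
        split
        · exact hw e
        · positivity
    _ = (Fintype.card E : ℝ) * Λ := by simp [Finset.sum_const, mul_comm]

omit [Fintype V] in
lemma aux_lazyWalk_nonneg {w : E → ℝ} {α : ℝ} (hα : 0 ≤ α) (hα1 : α ≤ 1) (hw0 : ∀ e, 0 ≤ w e)
    (x z : V) : 0 ≤ lazyWalk src tgt w α x z := by
  unfold lazyWalk
  split
  · exact hα
  · apply div_nonneg
    · apply mul_nonneg (by linarith)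
      apply Finset.sum_nonneg
      intro e _
      split
      · exact hw0 e
      · exact le_refl 0
    · apply Finset.sum_nonneg
      intro e _
      split
      · exact hw0 e
      · exact le_refl 0

lemma aux_lazyWalk_sum {w : E → ℝ} {α : ℝ} (x : V) :
    ∑ z : V, lazyWalk src tgt w α x z
      = α + (1 - α) * (∑ e : E, if src e = x ∧ tgt e ≠ x then w e else 0)
          / outWeight src w x := by
  classical
  unfold lazyWalk
  rw [← Finset.add_sum_erase _ _ (mem_univ x)]
  simp only [if_pos rfl]
  congr 1
  have hstep : ∀ z ∈ Finset.univ.erase x,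
      (if z = x then α
        else (1 - α) * (∑ e : E, if src e = x ∧ tgt e = z then w e else 0) / outWeight src w x)
      = (1 - α) * (∑ e : E, if src e = x ∧ tgt e = z then w e else 0) / outWeight src w x := by
    intro z hz
    rw [if_neg (Finset.mem_erase.mp hz).1]
  rw [Finset.sum_congr rfl hstep]
  rw [← Finset.sum_div]
  congr 1
  rw [← Finset.mul_sum]
  congr 1
  rw [Finset.sum_comm]
  apply Finset.sum_congr rfl
  intro e _
  by_cases h1 : src e = x
  · simp only [h1, true_and]
    rw [Finset.sum_ite_eq (Finset.univ.erase x) (tgt e) (fun _ => w e)]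
    simp [Finset.mem_erase]
  · simp [h1]

omit [Fintype V] in
lemma aux_outWeight_split {w : E → ℝ} (x : V) :
    outWeight src w x = (∑ e : E, if src e = x ∧ tgt e ≠ x then w e else 0)
      + (∑ e : E, if src e = x ∧ tgt e = x then w e else 0) := by
  classical
  unfold outWeight
  rw [← Finset.sum_add_distrib]
  apply Finset.sum_congr rfl
  intro e _
  by_cases h1 : src e = x <;> by_cases h2 : tgt e = x <;> simp [h1, h2]

lemma aux_lazyWalk_sum_one {w : E → ℝ} {α : ℝ} (x : V)
    (hO : 0 < outWeight src w x)
    (hgood : α = 1 ∨ ∀ τ : E, ¬(src τ = x ∧ tgt τ = x)) :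
    ∑ z : V, lazyWalk src tgt w α x z = 1 := by
  rw [aux_lazyWalk_sum]
  rcases hgood with h | h
  · simp [h]
  · have hS : (∑ e : E, if src e = x ∧ tgt e = x then w e else 0) = 0 := by
      apply Finset.sum_eq_zero
      intro e _
      rw [if_neg (h e)]
    have hsp := aux_outWeight_split src tgt (w := w) x
    rw [hS, add_zero] at hsp
    rw [← hsp]
    field_simp
    ring

lemma aux_lazyWalk_sum_ne_one {w : E → ℝ} {α Λ : ℝ} (hΛ : 0 < Λ) (hw : ∀ e, Λ⁻¹ ≤ w e)
    (hα1 : α ≤ 1) (x : V)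
    (hO : 0 < outWeight src w x)
    (hbad : ¬(α = 1 ∨ ∀ τ : E, ¬(src τ = x ∧ tgt τ = x))) :
    ∑ z : V, lazyWalk src tgt w α x z ≠ 1 := by
  push_neg at hbad
  obtain ⟨hα, τ, hτ1, hτ2⟩ := hbad
  have hαlt : α < 1 := lt_of_le_of_ne hα1 hα
  rw [aux_lazyWalk_sum]
  set S := ∑ e : E, if src e = x ∧ tgt e ≠ x then w e else 0 with hSdef
  have hsplit := aux_outWeight_split src tgt (w := w) x
  have hSL : Λ⁻¹ ≤ ∑ e : E, if src e = x ∧ tgt e = x then w e else 0 := by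
    calc Λ⁻¹ ≤ w τ := hw τ
      _ = (if src τ = x ∧ tgt τ = x then w τ else 0) := by simp [hτ1, hτ2]
      _ ≤ ∑ e : E, if src e = x ∧ tgt e = x then w e else 0 := by
          apply Finset.single_le_sum (fun e _ => ?_) (mem_univ τ)
          split
          · exact le_trans (by positivity) (hw e)
          · exact le_refl 0
  have hSlt : S < outWeight src w x := by
    have : (0:ℝ) < Λ⁻¹ := by positivity
    rw [hsplit]; linarith
  have hS0 : 0 ≤ S := by
    apply Finset.sum_nonneg
    intro e _
    split
    · exact le_trans (by positivity) (hw e)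
    · exact le_refl 0
  have hfrac : (1 - α) * S / outWeight src w x < 1 - α := by
    rw [div_lt_iff₀ hO]
    have h1α : 0 < 1 - α := by linarith
    nlinarith
  intro hcontra
  linarith

omit [Fintype V] in
lemma aux_abs_sum_ite_diff {w1 w2 : E → ℝ} {ε : ℝ} (hwd : ∀ e, |w1 e - w2 e| ≤ ε)
    (P : E → Prop) [DecidablePred P] :
    |(∑ e : E, if P e then w1 e else 0) - (∑ e : E, if P e then w2 e else 0)|
      ≤ (Fintype.card E : ℝ) * ε := by
  classical
  rw [← Finset.sum_sub_distrib]
  calc |∑ e : E, ((if P e then w1 e else 0) - (if P e then w2 e else 0))|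
      ≤ ∑ e : E, |(if P e then w1 e else 0) - (if P e then w2 e else 0)| :=
        Finset.abs_sum_le_sum_abs _ _
    _ ≤ ∑ _e : E, ε := by
        apply Finset.sum_le_sum
        intro e _
        by_cases h : P e
        · simpa [h] using hwd e
        · simp only [if_neg h, sub_zero, abs_zero]
          exact le_trans (abs_nonneg _) (hwd e)
    _ = (Fintype.card E : ℝ) * ε := by simp [mul_comm]

lemma aux_div_diff_bound {a b c d Λ M ε : ℝ} (hΛ : 0 < Λ) (hb : Λ⁻¹ ≤ b) (hd : Λ⁻¹ ≤ d)
    (hc0 : 0 ≤ c) (hcM : c ≤ M) (hdM : d ≤ M) (hM : 0 ≤ M)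
    (hac : |a - c| ≤ ε) (hbd : |b - d| ≤ ε) (hε : 0 ≤ ε) :
    |a / b - c / d| ≤ 2 * M * Λ ^ 2 * ε := by
  have hΛi : (0:ℝ) < Λ⁻¹ := by positivity
  have hb0 : 0 < b := lt_of_lt_of_le hΛi hb
  have hd0 : 0 < d := lt_of_lt_of_le hΛi hd
  rw [div_sub_div a c hb0.ne' hd0.ne', abs_div, abs_of_pos (mul_pos hb0 hd0)]
  have hnum : |a * d - b * c| ≤ 2 * M * ε := by
    have h1 : a * d - b * c = (a - c) * d + c * (d - b) := by ring
    rw [h1]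
    calc |(a - c) * d + c * (d - b)| ≤ |(a - c) * d| + |c * (d - b)| := abs_add_le _ _
      _ = |a - c| * d + c * |d - b| := by
          rw [abs_mul, abs_mul, abs_of_pos hd0, abs_of_nonneg hc0]
      _ ≤ ε * M + M * ε := by
          apply add_le_add
          · exact mul_le_mul hac hdM hd0.le hε
          · rw [abs_sub_comm]; exact mul_le_mul hcM hbd (abs_nonneg _) hM
      _ = 2 * M * ε := by ring
  rw [div_le_iff₀ (mul_pos hb0 hd0)]
  have hbd2 : Λ⁻¹ * Λ⁻¹ ≤ b * d := mul_le_mul hb hd hΛi.le hb0.le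
  have key := mul_le_mul_of_nonneg_left hbd2 (show (0:ℝ) ≤ 2*M*Λ^2*ε by positivity)
  have h2 : 2*M*Λ^2*ε*(Λ⁻¹*Λ⁻¹) = 2*M*ε := by field_simp
  linarith

omit [Fintype V] in
lemma aux_sum_ite_le {w : E → ℝ} {Λ : ℝ} (hΛ : 0 < Λ) (hw : ∀ e, w e ≤ Λ)
    (P : E → Prop) [DecidablePred P] :
    (∑ e : E, if P e then w e else 0) ≤ (Fintype.card E : ℝ) * Λ := by
  calc (∑ e : E, if P e then w e else 0) ≤ ∑ _e : E, Λ := by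
        apply Finset.sum_le_sum
        intro e _
        split
        · exact hw e
        · positivity
    _ = (Fintype.card E : ℝ) * Λ := by simp [mul_comm]

omit [Fintype V] in
lemma aux_sum_ite_nonneg {w : E → ℝ} (hw0 : ∀ e, 0 ≤ w e) (P : E → Prop) [DecidablePred P] :
    0 ≤ ∑ e : E, if P e then w e else 0 := by
  apply Finset.sum_nonneg
  intro e _
  split
  · exact hw0 e
  · exact le_refl 0

lemma aux_lazyWalk_l1 {w1 w2 : E → ℝ} {α Λ ε : ℝ} (hΛ : 0 < Λ)
    (hw1 : ∀ e, Λ⁻¹ ≤ w1 e ∧ w1 e ≤ Λ) (hw2 : ∀ e, Λ⁻¹ ≤ w2 e ∧ w2 e ≤ Λ)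
    (hα0 : 0 ≤ α) (hα1 : α ≤ 1) (hε : 0 ≤ ε) (hwd : ∀ e, |w1 e - w2 e| ≤ ε)
    {x : V} {e0 : E} (he0 : src e0 = x) :
    ∑ z : V, |lazyWalk src tgt w1 α x z - lazyWalk src tgt w2 α x z|
      ≤ (Fintype.card V : ℝ) *
        (2 * ((Fintype.card E : ℝ) * Λ) * Λ ^ 2 * ((Fintype.card E : ℝ) * ε)) := by
  classical
  set m := (Fintype.card E : ℝ) with hm
  have hm0 : 0 ≤ m := by positivity
  have hw10 : ∀ e, 0 ≤ w1 e := fun e => le_trans (by positivity) (hw1 e).1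
  have hw20 : ∀ e, 0 ≤ w2 e := fun e => le_trans (by positivity) (hw2 e).1
  have hbound : ∀ z : V, |lazyWalk src tgt w1 α x z - lazyWalk src tgt w2 α x z|
      ≤ 2 * (m * Λ) * Λ ^ 2 * (m * ε) := by
    intro z
    by_cases hz : z = x
    · simp only [lazyWalk, if_pos hz, sub_self, abs_zero]
      positivity
    · simp only [lazyWalk, if_neg hz]
      apply aux_div_diff_bound hΛ
          (aux_outWeight_pos src (hΛ := hΛ) (fun e => (hw1 e).1) he0)
          (aux_outWeight_pos src (hΛ := hΛ) (fun e => (hw2 e).1) he0)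
      · apply mul_nonneg (by linarith)
        exact aux_sum_ite_nonneg hw20 _
      · calc (1 - α) * (∑ e : E, if src e = x ∧ tgt e = z then w2 e else 0)
            ≤ 1 * (m * Λ) := by
              apply mul_le_mul (by linarith) (aux_sum_ite_le hΛ (fun e => (hw2 e).2) _)
                (aux_sum_ite_nonneg hw20 _) zero_le_one
          _ = m * Λ := one_mul _
      · exact aux_outWeight_le src hΛ hw20 (fun e => (hw2 e).2) x
      · positivity
      · rw [← mul_sub]
        rw [abs_mul, abs_of_nonneg (by linarith : (0:ℝ) ≤ 1 - α)]
        calc (1 - α) * |(∑ e : E, if src e = x ∧ tgt e = z then w1 e else 0)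
              - (∑ e : E, if src e = x ∧ tgt e = z then w2 e else 0)|
            ≤ 1 * (m * ε) := by
              apply mul_le_mul (by linarith) (aux_abs_sum_ite_diff hwd _) (abs_nonneg _)
                zero_le_one
          _ = m * ε := one_mul _
      · exact aux_abs_sum_ite_diff hwd _
      · positivity
  calc ∑ z : V, |lazyWalk src tgt w1 α x z - lazyWalk src tgt w2 α x z|
      ≤ ∑ _z : V, 2 * (m * Λ) * Λ ^ 2 * (m * ε) := Finset.sum_le_sum (fun z _ => hbound z)
    _ = (Fintype.card V : ℝ) * (2 * (m * Λ) * Λ ^ 2 * (m * ε)) := by simp [mul_comm]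

end LazyWalkLemmas

section Perturb
variable [Fintype V]

lemma aux_prod_coupling {μ ν : V → ℝ} (hμ0 : ∀ u, 0 ≤ μ u) (hν0 : ∀ v, 0 ≤ ν v)
    (hμ1 : ∑ u, μ u = 1) (hν1 : ∑ v, ν v = 1) :
    IsCoupling μ ν (fun u v => μ u * ν v) := by
  refine ⟨fun u v => mul_nonneg (hμ0 u) (hν0 v), fun u => ?_, fun v => ?_, ?_⟩
  · rw [← Finset.mul_sum, hν1, mul_one]
  · rw [← Finset.sum_mul, hμ1, one_mul]
  · simp only [← Finset.mul_sum, hν1, mul_one, hμ1]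

lemma aux_coupling_perturb {μ ν μh νh : V → ℝ} {d : V → V → ℝ} {B : ℝ}
    (hμ0 : ∀ u, 0 ≤ μ u) (hν0 : ∀ v, 0 ≤ ν v)
    (hμ1 : ∑ u, μ u = 1) (hν1 : ∑ v, ν v = 1)
    (hd0 : ∀ u v, 0 ≤ d u v) (hdB : ∀ u v, d u v ≤ B) (hB : 0 ≤ B)
    {Ah : V → V → ℝ} (hAh : IsCoupling μh νh Ah) :
    ∃ A : V → V → ℝ, IsCoupling μ ν A ∧
      ∑ u, ∑ v, A u v * d u v ≤ (∑ u, ∑ v, Ah u v * d u v)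
        + ((∑ u, |μ u - μh u|) + (∑ v, |ν v - νh v|)) * B := by
  classical
  obtain ⟨hA0, hrow, hcol, htot⟩ := hAh
  have hμh0 : ∀ u, 0 ≤ μh u := fun u => (hrow u) ▸ Finset.sum_nonneg (fun v _ => hA0 u v)
  have hνh0 : ∀ v, 0 ≤ νh v := fun v => (hcol v) ▸ Finset.sum_nonneg (fun u _ => hA0 u v)
  set θ : V → ℝ := fun u => min (μ u / μh u) 1 with hθdef
  set η : V → ℝ := fun v => min (ν v / νh v) 1 with hηdef
  have hθ0 : ∀ u, 0 ≤ θ u := fun u => le_min (div_nonneg (hμ0 u) (hμh0 u)) zero_le_one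
  have hη0 : ∀ v, 0 ≤ η v := fun v => le_min (div_nonneg (hν0 v) (hνh0 v)) zero_le_one
  have hθ1 : ∀ u, θ u ≤ 1 := fun u => min_le_right _ _
  have hη1 : ∀ v, η v ≤ 1 := fun v => min_le_right _ _
  have hθμ : ∀ u, μh u * θ u ≤ μ u := by
    intro u
    by_cases h : μh u = 0
    · rw [h, zero_mul]; exact hμ0 u
    · have hpos : 0 < μh u := lt_of_le_of_ne (hμh0 u) (Ne.symm h)
      calc μh u * θ u ≤ μh u * (μ u / μh u) := by
            apply mul_le_mul_of_nonneg_left (min_le_left _ _) hpos.le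
        _ = μ u := by field_simp
  have hην : ∀ v, νh v * η v ≤ ν v := by
    intro v
    by_cases h : νh v = 0
    · rw [h, zero_mul]; exact hν0 v
    · have hpos : 0 < νh v := lt_of_le_of_ne (hνh0 v) (Ne.symm h)
      calc νh v * η v ≤ νh v * (ν v / νh v) := by
            apply mul_le_mul_of_nonneg_left (min_le_left _ _) hpos.le
        _ = ν v := by field_simp
  have hθdrop : ∀ u, μh u * (1 - θ u) ≤ |μ u - μh u| := by
    intro u
    by_cases h : μh u = 0
    · rw [h, zero_mul]; exact abs_nonneg _
    · have hpos : 0 < μh u := lt_of_le_of_ne (hμh0 u) (Ne.symm h)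
      have heq : μh u * θ u = min (μ u) (μh u) := by
        rw [hθdef]
        simp only []
        rw [mul_min_of_nonneg _ _ hpos.le]
        congr 1
        · field_simp
        · rw [mul_one]
      rw [mul_sub, mul_one, heq]
      rcases min_cases (μ u) (μh u) with ⟨h1, _⟩ | ⟨h1, h2⟩
      · rw [h1, abs_sub_comm]; exact le_abs_self _
      · rw [h1]; simp only [sub_self]; exact abs_nonneg _
  have hηdrop : ∀ v, νh v * (1 - η v) ≤ |ν v - νh v| := by
    intro v
    by_cases h : νh v = 0
    · rw [h, zero_mul]; exact abs_nonneg _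
    · have hpos : 0 < νh v := lt_of_le_of_ne (hνh0 v) (Ne.symm h)
      have heq : νh v * η v = min (ν v) (νh v) := by
        rw [hηdef]
        simp only []
        rw [mul_min_of_nonneg _ _ hpos.le]
        congr 1
        · field_simp
        · rw [mul_one]
      rw [mul_sub, mul_one, heq]
      rcases min_cases (ν v) (νh v) with ⟨h1, _⟩ | ⟨h1, h2⟩
      · rw [h1, abs_sub_comm]; exact le_abs_self _
      · rw [h1]; simp only [sub_self]; exact abs_nonneg _
  -- the shrunk coupling
  set Bm : V → V → ℝ := fun u v => Ah u v * (θ u * η v) with hBmdef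
  have hBm0 : ∀ u v, 0 ≤ Bm u v := fun u v =>
    mul_nonneg (hA0 u v) (mul_nonneg (hθ0 u) (hη0 v))
  have hBmle : ∀ u v, Bm u v ≤ Ah u v := by
    intro u v
    calc Ah u v * (θ u * η v) ≤ Ah u v * 1 := by
          apply mul_le_mul_of_nonneg_left _ (hA0 u v)
          calc θ u * η v ≤ 1 * 1 := mul_le_mul (hθ1 u) (hη1 v) (hη0 v) zero_le_one
            _ = 1 := one_mul 1
      _ = Ah u v := mul_one _
  have hrowBm : ∀ u, ∑ v, Bm u v ≤ μ u := by
    intro u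
    calc ∑ v, Ah u v * (θ u * η v) ≤ ∑ v, Ah u v * θ u := by
          apply Finset.sum_le_sum
          intro v _
          apply mul_le_mul_of_nonneg_left _ (hA0 u v)
          calc θ u * η v ≤ θ u * 1 := mul_le_mul_of_nonneg_left (hη1 v) (hθ0 u)
            _ = θ u := mul_one _
      _ = μh u * θ u := by rw [← Finset.sum_mul, hrow]
      _ ≤ μ u := hθμ u
  have hcolBm : ∀ v, ∑ u, Bm u v ≤ ν v := by
    intro v
    calc ∑ u, Ah u v * (θ u * η v) ≤ ∑ u, Ah u v * η v := by
          apply Finset.sum_le_sum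
          intro u _
          apply mul_le_mul_of_nonneg_left _ (hA0 u v)
          calc θ u * η v ≤ 1 * η v := mul_le_mul_of_nonneg_right (hθ1 u) (hη0 v)
            _ = η v := one_mul _
      _ = νh v * η v := by rw [← Finset.sum_mul, hcol]
      _ ≤ ν v := hην v
  set p : V → ℝ := fun u => μ u - ∑ v, Bm u v with hpdef
  set q : V → ℝ := fun v => ν v - ∑ u, Bm u v with hqdef
  have hp0 : ∀ u, 0 ≤ p u := fun u => sub_nonneg.mpr (hrowBm u)
  have hq0 : ∀ v, 0 ≤ q v := fun v => sub_nonneg.mpr (hcolBm v)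
  set t : ℝ := ∑ u, p u with htdef
  have ht0 : 0 ≤ t := Finset.sum_nonneg (fun u _ => hp0 u)
  have hqt : ∑ v, q v = t := by
    rw [htdef, hpdef, hqdef]
    simp only [Finset.sum_sub_distrib]
    rw [hμ1, hν1, Finset.sum_comm]
  -- bound on t
  have htle : t ≤ (∑ u, |μ u - μh u|) + (∑ v, |ν v - νh v|) := by
    have h1 : t = ∑ u, ∑ v, Ah u v * (1 - θ u * η v) := by
      rw [htdef, hpdef]
      simp only [Finset.sum_sub_distrib]
      rw [hμ1]
      rw [show (∑ u : V, ∑ v : V, Ah u v * (1 - θ u * η v))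
          = (∑ u : V, ∑ v : V, Ah u v) - ∑ u : V, ∑ v : V, Bm u v by
        simp only [mul_sub, mul_one, Finset.sum_sub_distrib, hBmdef]]
      rw [htot]
    have h2 : ∀ u v, Ah u v * (1 - θ u * η v) ≤ Ah u v * (1 - θ u) + Ah u v * (1 - η v) := by
      intro u v
      nlinarith [mul_nonneg (hA0 u v) (mul_nonneg (sub_nonneg.mpr (hθ1 u)) (sub_nonneg.mpr (hη1 v)))]
    calc t ≤ ∑ u, ∑ v, (Ah u v * (1 - θ u) + Ah u v * (1 - η v)) := by
          rw [h1]
          exact Finset.sum_le_sum (fun u _ => Finset.sum_le_sum (fun v _ => h2 u v))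
      _ = (∑ u, μh u * (1 - θ u)) + ∑ v, νh v * (1 - η v) := by
          simp only [Finset.sum_add_distrib]
          congr 1
          · apply Finset.sum_congr rfl
            intro u _
            rw [← Finset.sum_mul, hrow]
          · rw [Finset.sum_comm]
            apply Finset.sum_congr rfl
            intro v _
            rw [← Finset.sum_mul, hcol]
      _ ≤ (∑ u, |μ u - μh u|) + (∑ v, |ν v - νh v|) :=
          add_le_add (Finset.sum_le_sum (fun u _ => hθdrop u))
            (Finset.sum_le_sum (fun v _ => hηdrop v))
  -- now build the coupling
  by_cases htz : t = 0
  · -- all p, q vanish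
    have hpz : ∀ u, p u = 0 := by
      intro u
      have h : ∑ u, p u = 0 := htdef ▸ htz
      exact (Finset.sum_eq_zero_iff_of_nonneg (fun u _ => hp0 u)).mp h u (mem_univ u)
    have hqz : ∀ v, q v = 0 := by
      intro v
      have h : ∑ v, q v = 0 := by rw [hqt]; exact htz
      exact (Finset.sum_eq_zero_iff_of_nonneg (fun v _ => hq0 v)).mp h v (mem_univ v)
    refine ⟨Bm, ⟨hBm0, ?_, ?_, ?_⟩, ?_⟩
    · intro u; have := hpz u; rw [hpdef] at this; simp only [] at this; linarith
    · intro v; have := hqz v; rw [hqdef] at this; simp only [] at this; linarith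
    · have : ∀ u, ∑ v, Bm u v = μ u := by
        intro u; have := hpz u; rw [hpdef] at this; simp only [] at this; linarith
      rw [Finset.sum_congr rfl (fun u _ => this u), hμ1]
    · have hc : ∑ u, ∑ v, Bm u v * d u v ≤ ∑ u, ∑ v, Ah u v * d u v := by
        apply Finset.sum_le_sum
        intro u _
        apply Finset.sum_le_sum
        intro v _
        exact mul_le_mul_of_nonneg_right (hBmle u v) (hd0 u v)
      have hnn : 0 ≤ ((∑ u, |μ u - μh u|) + (∑ v, |ν v - νh v|)) * B := by
        apply mul_nonneg _ hB
        apply add_nonneg <;> exact Finset.sum_nonneg (fun _ _ => abs_nonneg _)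
      linarith
  · have htpos : 0 < t := lt_of_le_of_ne ht0 (Ne.symm htz)
    refine ⟨fun u v => Bm u v + p u * q v / t, ⟨?_, ?_, ?_, ?_⟩, ?_⟩
    · intro u v
      have : 0 ≤ p u * q v / t := div_nonneg (mul_nonneg (hp0 u) (hq0 v)) ht0
      have := hBm0 u v
      linarith
    · intro u
      rw [Finset.sum_add_distrib]
      have : ∑ v, p u * q v / t = p u := by
        rw [show (∑ v, p u * q v / t) = p u * (∑ v, q v) / t by
          rw [Finset.mul_sum, Finset.sum_div]]
        rw [hqt, mul_div_assoc, div_self htz, mul_one]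
      rw [this, hpdef]
      simp only []
      ring
    · intro v
      rw [Finset.sum_add_distrib]
      have : ∑ u, p u * q v / t = q v := by
        rw [show (∑ u, p u * q v / t) = (∑ u, p u) * q v / t by
          rw [Finset.sum_mul, Finset.sum_div]]
        rw [← htdef, mul_comm, mul_div_assoc, div_self htz, mul_one]
      rw [this, hqdef]
      simp only []
      ring
    · -- total
      have hrowA : ∀ u, (∑ v, (Bm u v + p u * q v / t)) = μ u := by
        intro u
        rw [Finset.sum_add_distrib]
        have : ∑ v, p u * q v / t = p u := by
          rw [show (∑ v, p u * q v / t) = p u * (∑ v, q v) / t by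
            rw [Finset.mul_sum, Finset.sum_div]]
          rw [hqt, mul_div_assoc, div_self htz, mul_one]
        rw [this, hpdef]
        simp only []
        ring
      rw [Finset.sum_congr rfl (fun u _ => hrowA u), hμ1]
    · -- cost bound
      have hsplit : ∑ u, ∑ v, (Bm u v + p u * q v / t) * d u v
          = (∑ u, ∑ v, Bm u v * d u v) + ∑ u, ∑ v, (p u * q v / t) * d u v := by
        simp only [add_mul, Finset.sum_add_distrib]
      rw [hsplit]
      have hc1 : ∑ u, ∑ v, Bm u v * d u v ≤ ∑ u, ∑ v, Ah u v * d u v := by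
        apply Finset.sum_le_sum
        intro u _
        apply Finset.sum_le_sum
        intro v _
        exact mul_le_mul_of_nonneg_right (hBmle u v) (hd0 u v)
      have hc2 : ∑ u, ∑ v, (p u * q v / t) * d u v ≤ t * B := by
        calc ∑ u, ∑ v, (p u * q v / t) * d u v ≤ ∑ u, ∑ v, (p u * q v / t) * B := by
              apply Finset.sum_le_sum
              intro u _
              apply Finset.sum_le_sum
              intro v _
              apply mul_le_mul_of_nonneg_left (hdB u v)
              exact div_nonneg (mul_nonneg (hp0 u) (hq0 v)) ht0
          _ = (∑ u, p u) * (∑ v, q v) / t * B := by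
              rw [Finset.sum_mul, Finset.sum_div, Finset.sum_mul]
              apply Finset.sum_congr rfl
              intro u _
              rw [Finset.mul_sum, Finset.sum_div, Finset.sum_mul]
          _ = t * B := by
              rw [← htdef, hqt, mul_comm t t, mul_div_assoc, div_self htz, mul_one]
      have htB : t * B ≤ ((∑ u, |μ u - μh u|) + (∑ v, |ν v - νh v|)) * B :=
        mul_le_mul_of_nonneg_right htle hB
      linarith
end Perturb

section W
variable [Fintype V]

lemma aux_cost_nonneg {A : V → V → ℝ} {d : V → V → ℝ} (hA0 : ∀ u v, 0 ≤ A u v)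
    (hd0 : ∀ u v, 0 ≤ d u v) : 0 ≤ ∑ u, ∑ v, A u v * d u v :=
  Finset.sum_nonneg fun u _ => Finset.sum_nonneg fun v _ => mul_nonneg (hA0 u v) (hd0 u v)

lemma aux_wset_bddBelow (src tgt : E → V) (w : E → ℝ) (μ₁ μ₂ : V → ℝ)
    (hd0 : ∀ u v, 0 ≤ gdist src tgt w u v) :
    BddBelow {c : ℝ | ∃ A : V → V → ℝ, IsCoupling μ₁ μ₂ A ∧
      c = ∑ u, ∑ v, A u v * gdist src tgt w u v} := by
  refine ⟨0, fun c hc => ?_⟩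
  obtain ⟨A, hA, rfl⟩ := hc
  exact aux_cost_nonneg hA.1 hd0

/-- One-sided comparison of Wasserstein distances. -/
lemma aux_wasserstein_compare (src tgt : E → V) (w1 w2 : E → ℝ) (μ1 ν1 μ2 ν2 : V → ℝ)
    {B D L : ℝ}
    (hd10 : ∀ u v, 0 ≤ gdist src tgt w1 u v) (hd1B : ∀ u v, gdist src tgt w1 u v ≤ B)
    (hd20 : ∀ u v, 0 ≤ gdist src tgt w2 u v)
    (hdd : ∀ u v, gdist src tgt w1 u v ≤ gdist src tgt w2 u v + D)
    (hμ10 : ∀ u, 0 ≤ μ1 u) (hν10 : ∀ v, 0 ≤ ν1 v)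
    (hμ11 : ∑ u, μ1 u = 1) (hν11 : ∑ v, ν1 v = 1)
    (hμ20 : ∀ u, 0 ≤ μ2 u) (hν20 : ∀ v, 0 ≤ ν2 v)
    (hμ21 : ∑ u, μ2 u = 1) (hν21 : ∑ v, ν2 v = 1)
    (hB : 0 ≤ B) (hL : 0 ≤ L)
    (hl1 : ∑ u, |μ1 u - μ2 u| ≤ L) (hl2 : ∑ v, |ν1 v - ν2 v| ≤ L) :
    wasserstein src tgt w1 μ1 ν1 ≤ wasserstein src tgt w2 μ2 ν2 + D + 2 * L * B := by
  apply le_of_forall_pos_le_add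
  intro ε' hε'
  set S2 := {c : ℝ | ∃ A : V → V → ℝ, IsCoupling μ2 ν2 A ∧
    c = ∑ u, ∑ v, A u v * gdist src tgt w2 u v} with hS2def
  have hS2ne : S2.Nonempty :=
    ⟨_, fun u v => μ2 u * ν2 v, aux_prod_coupling hμ20 hν20 hμ21 hν21, rfl⟩
  have hS2bdd := aux_wset_bddBelow src tgt w2 μ2 ν2 hd20
  have hlt : sInf S2 < wasserstein src tgt w2 μ2 ν2 + ε' := by
    have : sInf S2 = wasserstein src tgt w2 μ2 ν2 := rfl
    linarith [this]
  obtain ⟨c, ⟨Ah, hAh, rfl⟩, hclt⟩ := (csInf_lt_iff hS2bdd hS2ne).mp hlt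
  -- compare costs of Ah under the two metrics
  have hcost12 : ∑ u, ∑ v, Ah u v * gdist src tgt w1 u v
      ≤ (∑ u, ∑ v, Ah u v * gdist src tgt w2 u v) + D := by
    have step : ∀ u v, Ah u v * gdist src tgt w1 u v
        ≤ Ah u v * gdist src tgt w2 u v + Ah u v * D := by
      intro u v
      have := mul_le_mul_of_nonneg_left (hdd u v) (hAh.1 u v)
      linarith [this, mul_add (Ah u v) (gdist src tgt w2 u v) D]
    calc ∑ u, ∑ v, Ah u v * gdist src tgt w1 u v
        ≤ ∑ u, ∑ v, (Ah u v * gdist src tgt w2 u v + Ah u v * D) :=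
          Finset.sum_le_sum fun u _ => Finset.sum_le_sum fun v _ => step u v
      _ = (∑ u, ∑ v, Ah u v * gdist src tgt w2 u v) + (∑ u, ∑ v, Ah u v) * D := by
          simp only [Finset.sum_add_distrib, Finset.sum_mul]
      _ = (∑ u, ∑ v, Ah u v * gdist src tgt w2 u v) + D := by rw [hAh.2.2.2, one_mul]
  -- perturb the coupling
  obtain ⟨A, hA, hAcost⟩ := aux_coupling_perturb hμ10 hν10 hμ11 hν11 hd10 hd1B hB hAh
  have hW1le : wasserstein src tgt w1 μ1 ν1 ≤ ∑ u, ∑ v, A u v * gdist src tgt w1 u v :=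
    csInf_le (aux_wset_bddBelow src tgt w1 μ1 ν1 hd10) ⟨A, hA, rfl⟩
  have hpert : ((∑ u, |μ1 u - μ2 u|) + (∑ v, |ν1 v - ν2 v|)) * B ≤ 2 * L * B := by
    apply mul_le_mul_of_nonneg_right _ hB
    linarith
  linarith

lemma aux_wasserstein_empty (src tgt : E → V) (w : E → ℝ) (μ1 μ2 : V → ℝ)
    (h : ∑ u, μ1 u ≠ 1 ∨ ∑ v, μ2 v ≠ 1) : wasserstein src tgt w μ1 μ2 = 0 := by
  unfold wasserstein
  convert Real.sInf_empty
  rw [Set.eq_empty_iff_forall_notMem]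
  rintro c ⟨A, ⟨hA0, hrow, hcol, htot⟩, rfl⟩
  rcases h with h | h
  · apply h
    rw [show (∑ u, μ1 u) = ∑ u, ∑ v, A u v from
      Finset.sum_congr rfl fun u _ => (hrow u).symm]
    exact htot
  · apply h
    rw [show (∑ v, μ2 v) = ∑ v, ∑ u, A u v from
      Finset.sum_congr rfl fun v _ => (hcol v).symm]
    rw [Finset.sum_comm]
    exact htot
end W

lemma aux_abs_le_enorm [Fintype E] (u : E → ℝ) (τ : E) : |u τ| ≤ _root_.enorm u := by
  rw [_root_.enorm, ← Real.sqrt_sq_eq_abs]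
  apply Real.sqrt_le_sqrt
  exact Finset.single_le_sum (fun e _ => sq_nonneg (u e)) (mem_univ τ)

set_option maxHeartbeats 1000000 in
theorem wasserstein_lipschitz_in_weights [Fintype V] [Fintype E] [DecidableEq V]
    (src tgt : E → V) (hsc : StronglyConnected src tgt)
    (α : ℝ) (hα : α ∈ Set.Icc (0:ℝ) 1) (e : E)
    (Λ δ : ℝ) (hΛ : 0 < Λ) (hδ : 0 < δ) :
    ∃ C : ℝ, 0 < C ∧
      ∀ w1 w2 : E → ℝ,
        (∀ τ, Λ⁻¹ ≤ w1 τ ∧ w1 τ ≤ Λ) → (∀ τ, Λ⁻¹ ≤ w2 τ ∧ w2 τ ≤ Λ) →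
        (∀ τ, |w1 τ - w2 τ| ≤ δ) →
        |wasserstein src tgt w1 (lazyWalk src tgt w1 α (src e)) (lazyWalk src tgt w1 α (tgt e)) -
          wasserstein src tgt w2 (lazyWalk src tgt w2 α (src e)) (lazyWalk src tgt w2 α (tgt e))|
          ≤ C * _root_.enorm (w1 - w2) := by
  classical
  obtain ⟨hα0, hα1⟩ := hα
  obtain ⟨ey, hey⟩ : ∃ τ : E, src τ = tgt e := by
    obtain ⟨p, hp⟩ := hsc (tgt e) (src e)
    cases p with
    | nil => exact ⟨e, (show tgt e = src e from hp).symm⟩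
    | cons a p => exact ⟨a, hp.1⟩
  set n := (Fintype.card V : ℝ) with hn
  set m := (Fintype.card E : ℝ) with hmdef
  have hn0 : 0 ≤ n := by positivity
  have hm0 : 0 ≤ m := by positivity
  set N : ℕ := Finset.univ.sup (fun xy : V × V => (hsc xy.1 xy.2).choose.length) with hN
  set NB : ℝ := Λ * N with hNB
  have hNB0 : 0 ≤ NB := by rw [hNB]; positivity
  set K1 : ℝ := Λ * (NB + 1) with hK1
  have hK10 : 0 < K1 := by rw [hK1]; positivity
  set K2 : ℝ := n * (2 * (m * Λ) * Λ ^ 2 * m) with hK2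
  have hK20 : 0 ≤ K2 := by rw [hK2]; positivity
  refine ⟨K1 + 2 * K2 * NB + 1, by positivity, ?_⟩
  intro w1 w2 hw1 hw2 hwδ
  set ε := _root_.enorm (w1 - w2) with hεdef
  have hε0 : 0 ≤ ε := Real.sqrt_nonneg _
  have hwd : ∀ τ, |w1 τ - w2 τ| ≤ ε := by
    intro τ
    have := aux_abs_le_enorm (w1 - w2) τ
    simpa using this
  have hwd' : ∀ τ, |w2 τ - w1 τ| ≤ ε := by
    intro τ
    rw [abs_sub_comm]
    exact hwd τ
  have hw1a : ∀ τ, Λ⁻¹ ≤ w1 τ := fun τ => (hw1 τ).1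
  have hw1b : ∀ τ, w1 τ ≤ Λ := fun τ => (hw1 τ).2
  have hw2a : ∀ τ, Λ⁻¹ ≤ w2 τ := fun τ => (hw2 τ).1
  have hw2b : ∀ τ, w2 τ ≤ Λ := fun τ => (hw2 τ).2
  have hw10 : ∀ τ, 0 ≤ w1 τ := fun τ => le_trans (by positivity) (hw1a τ)
  have hw20 : ∀ τ, 0 ≤ w2 τ := fun τ => le_trans (by positivity) (hw2a τ)
  have hgd1_nonneg : ∀ u v, 0 ≤ gdist src tgt w1 u v :=
    fun u v => aux_gdist_nonneg src tgt hw10 u v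
  have hgd2_nonneg : ∀ u v, 0 ≤ gdist src tgt w2 u v :=
    fun u v => aux_gdist_nonneg src tgt hw20 u v
  have hgdB : ∀ w : E → ℝ, (∀ τ, 0 ≤ w τ) → (∀ τ, w τ ≤ Λ) →
      ∀ u v : V, gdist src tgt w u v ≤ NB := by
    intro w hw0 hwb u v
    rw [hNB]
    have hp := (hsc u v).choose_spec
    calc gdist src tgt w u v ≤ pathWeight w (hsc u v).choose :=
          aux_gdist_le_pathWeight src tgt hw0 hp
      _ ≤ Λ * (hsc u v).choose.length := aux_pathWeight_le hwb _
      _ ≤ Λ * (N : ℝ) := by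
          have hle : (hsc u v).choose.length ≤ N :=
            Finset.le_sup (f := fun xy : V × V => (hsc xy.1 xy.2).choose.length)
              (Finset.mem_univ (u, v))
          have hle' : ((hsc u v).choose.length : ℝ) ≤ (N : ℝ) := by exact_mod_cast hle
          nlinarith
  have hdd12 : ∀ u v, gdist src tgt w1 u v ≤ gdist src tgt w2 u v + K1 * ε := by
    intro u v
    have h := aux_gdist_lipschitz src tgt hΛ hw1a hw2a hε0 hwd u v
      (hgdB w2 hw20 hw2b u v) (hsc u v)
    rw [hK1]
    exact h
  have hdd21 : ∀ u v, gdist src tgt w2 u v ≤ gdist src tgt w1 u v + K1 * ε := by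
    intro u v
    have h := aux_gdist_lipschitz src tgt hΛ hw2a hw1a hε0 hwd' u v
      (hgdB w1 hw10 hw1b u v) (hsc u v)
    rw [hK1]
    exact h
  have hiΛ : (0:ℝ) < Λ⁻¹ := by positivity
  have hOx1 : 0 < outWeight src w1 (src e) :=
    lt_of_lt_of_le hiΛ (aux_outWeight_pos src hΛ hw1a rfl)
  have hOx2 : 0 < outWeight src w2 (src e) :=
    lt_of_lt_of_le hiΛ (aux_outWeight_pos src hΛ hw2a rfl)
  have hOy1 : 0 < outWeight src w1 (tgt e) :=
    lt_of_lt_of_le hiΛ (aux_outWeight_pos src hΛ hw1a hey)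
  have hOy2 : 0 < outWeight src w2 (tgt e) :=
    lt_of_lt_of_le hiΛ (aux_outWeight_pos src hΛ hw2a hey)
  by_cases hgx : α = 1 ∨ ∀ τ : E, ¬(src τ = src e ∧ tgt τ = src e)
  · by_cases hgy : α = 1 ∨ ∀ τ : E, ¬(src τ = tgt e ∧ tgt τ = tgt e)
    · -- the good case: all four lazy walk measures are probability measures
      have hμ1x0 : ∀ u, 0 ≤ lazyWalk src tgt w1 α (src e) u :=
        aux_lazyWalk_nonneg src tgt hα0 hα1 hw10 _
      have hμ2x0 : ∀ u, 0 ≤ lazyWalk src tgt w2 α (src e) u :=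
        aux_lazyWalk_nonneg src tgt hα0 hα1 hw20 _
      have hμ1y0 : ∀ u, 0 ≤ lazyWalk src tgt w1 α (tgt e) u :=
        aux_lazyWalk_nonneg src tgt hα0 hα1 hw10 _
      have hμ2y0 : ∀ u, 0 ≤ lazyWalk src tgt w2 α (tgt e) u :=
        aux_lazyWalk_nonneg src tgt hα0 hα1 hw20 _
      have hμ1x1 : ∑ u, lazyWalk src tgt w1 α (src e) u = 1 :=
        aux_lazyWalk_sum_one src tgt (src e) hOx1 hgx
      have hμ2x1 : ∑ u, lazyWalk src tgt w2 α (src e) u = 1 :=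
        aux_lazyWalk_sum_one src tgt (src e) hOx2 hgx
      have hμ1y1 : ∑ u, lazyWalk src tgt w1 α (tgt e) u = 1 :=
        aux_lazyWalk_sum_one src tgt (tgt e) hOy1 hgy
      have hμ2y1 : ∑ u, lazyWalk src tgt w2 α (tgt e) u = 1 :=
        aux_lazyWalk_sum_one src tgt (tgt e) hOy2 hgy
      have hl1x : ∑ z, |lazyWalk src tgt w1 α (src e) z - lazyWalk src tgt w2 α (src e) z|
          ≤ K2 * ε := by
        have h := aux_lazyWalk_l1 src tgt hΛ hw1 hw2 hα0 hα1 hε0 hwd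
          (e0 := e) (x := src e) rfl
        calc ∑ z, |lazyWalk src tgt w1 α (src e) z - lazyWalk src tgt w2 α (src e) z|
            ≤ n * (2 * (m * Λ) * Λ ^ 2 * (m * ε)) := h
          _ = K2 * ε := by rw [hK2]; ring
      have hl1y : ∑ z, |lazyWalk src tgt w1 α (tgt e) z - lazyWalk src tgt w2 α (tgt e) z|
          ≤ K2 * ε := by
        have h := aux_lazyWalk_l1 src tgt hΛ hw1 hw2 hα0 hα1 hε0 hwd
          (e0 := ey) (x := tgt e) hey
        calc ∑ z, |lazyWalk src tgt w1 α (tgt e) z - lazyWalk src tgt w2 α (tgt e) z|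
            ≤ n * (2 * (m * Λ) * Λ ^ 2 * (m * ε)) := h
          _ = K2 * ε := by rw [hK2]; ring
      have hl1x' : ∑ z, |lazyWalk src tgt w2 α (src e) z - lazyWalk src tgt w1 α (src e) z|
          ≤ K2 * ε := by
        rw [Finset.sum_congr rfl (fun z _ => abs_sub_comm
          (lazyWalk src tgt w2 α (src e) z) (lazyWalk src tgt w1 α (src e) z))]
        exact hl1x
      have hl1y' : ∑ z, |lazyWalk src tgt w2 α (tgt e) z - lazyWalk src tgt w1 α (tgt e) z|
          ≤ K2 * ε := by
        rw [Finset.sum_congr rfl (fun z _ => abs_sub_comm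
          (lazyWalk src tgt w2 α (tgt e) z) (lazyWalk src tgt w1 α (tgt e) z))]
        exact hl1y
      have hK2ε0 : 0 ≤ K2 * ε := mul_nonneg hK20 hε0
      have h12 := aux_wasserstein_compare src tgt w1 w2
        (lazyWalk src tgt w1 α (src e)) (lazyWalk src tgt w1 α (tgt e))
        (lazyWalk src tgt w2 α (src e)) (lazyWalk src tgt w2 α (tgt e))
        hgd1_nonneg (hgdB w1 hw10 hw1b) hgd2_nonneg hdd12
        hμ1x0 hμ1y0 hμ1x1 hμ1y1 hμ2x0 hμ2y0 hμ2x1 hμ2y1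
        hNB0 hK2ε0 hl1x hl1y
      have h21 := aux_wasserstein_compare src tgt w2 w1
        (lazyWalk src tgt w2 α (src e)) (lazyWalk src tgt w2 α (tgt e))
        (lazyWalk src tgt w1 α (src e)) (lazyWalk src tgt w1 α (tgt e))
        hgd2_nonneg (hgdB w2 hw20 hw2b) hgd1_nonneg hdd21
        hμ2x0 hμ2y0 hμ2x1 hμ2y1 hμ1x0 hμ1y0 hμ1x1 hμ1y1
        hNB0 hK2ε0 hl1x' hl1y'
      have hC : K1 * ε + 2 * (K2 * ε) * NB ≤ (K1 + 2 * K2 * NB + 1) * ε := by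
        nlinarith [hε0]
      rw [abs_sub_le_iff]
      exact ⟨by linarith, by linarith⟩
    · -- bad case at tgt e
      have hz1 : wasserstein src tgt w1 (lazyWalk src tgt w1 α (src e))
          (lazyWalk src tgt w1 α (tgt e)) = 0 :=
        aux_wasserstein_empty src tgt w1 _ _
          (Or.inr (aux_lazyWalk_sum_ne_one src tgt hΛ hw1a hα1 (tgt e) hOy1 hgy))
      have hz2 : wasserstein src tgt w2 (lazyWalk src tgt w2 α (src e))
          (lazyWalk src tgt w2 α (tgt e)) = 0 :=
        aux_wasserstein_empty src tgt w2 _ _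
          (Or.inr (aux_lazyWalk_sum_ne_one src tgt hΛ hw2a hα1 (tgt e) hOy2 hgy))
      rw [hz1, hz2, sub_zero, abs_zero]
      positivity
  · -- bad case at src e
    have hz1 : wasserstein src tgt w1 (lazyWalk src tgt w1 α (src e))
        (lazyWalk src tgt w1 α (tgt e)) = 0 :=
      aux_wasserstein_empty src tgt w1 _ _
        (Or.inl (aux_lazyWalk_sum_ne_one src tgt hΛ hw1a hα1 (src e) hOx1 hgx))
    have hz2 : wasserstein src tgt w2 (lazyWalk src tgt w2 α (src e))
        (lazyWalk src tgt w2 α (tgt e)) = 0 :=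
      aux_wasserstein_empty src tgt w2 _ _
        (Or.inl (aux_lazyWalk_sum_ne_one src tgt hΛ hw2a hα1 (src e) hOx2 hgx))
    rw [hz1, hz2, sub_zero, abs_zero]
    positivity
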